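/- Let p be prime, let C ⊆ Z_p^{2n} be a linear subspace, and let λ : C → ℂ be a function. Suppose ψ, ψ′ ∈ ℂ^{p^n} both satisfy XZ(c)ψ = λ(c)ψ and XZ(c)ψ′ = λ(c)ψ′ for all c ∈ C. Then for every e ∈ Z_p^{2n} with e ∉ C^⊥, ⟨ψ′, XZ(e)ψ⟩ = 0; that is, an error outside C^⊥ maps the stabilizer code into an orthogonal eigenspace. -/

import Mathlib

open scoped BigOperators
open Matrix

/-- `omg p` is the complex primitive `p`-th root of unity `exp(2πi/p)`. -/
noncomputable def omg (p : ℕ) : ℂ := Complex.exp (2 * Real.pi * Complex.I / p)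

/-- The generalized Pauli matrix `XZ(u) = X^{a_1}Z^{b_1} ⊗ ⋯ ⊗ X^{a_n}Z^{b_n}`
for `u = ((a_1,b_1),…,(a_n,b_n)) ∈ (Z_p²)ⁿ`, written out entrywise with respect to the
computational basis of `(ℂ^p)^{⊗n} ≃ ℂ^{p^n}`, whose coordinates are indexed by
`Fin n → ZMod p`.  (It is the matrix determined by
`XZ(u) |i₁ … iₙ⟩ = ∏_t ω^{b_t i_t} |i₁+a₁, …, iₙ+aₙ⟩`.) -/
noncomputable def XZ (p n : ℕ) (u : Fin n → ZMod p × ZMod p) :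
    Matrix (Fin n → ZMod p) (Fin n → ZMod p) ℂ :=
  fun j i => ∏ t : Fin n, if j t = i t + (u t).1 then omg p ^ ((u t).2 * i t).val else 0

/-- The symplectic inner product `⟨u,v⟩ = Σ b_i c_i − a_i d_i` on `Z_p^{2n}`. -/
def symp (p n : ℕ) (u v : Fin n → ZMod p × ZMod p) : ZMod p :=
  ∑ t : Fin n, ((u t).2 * (v t).1 - (u t).1 * (v t).2)

/-- The standard Hermitian inner product on `I → ℂ`. -/
noncomputable def cinner {I : Type*} [Fintype I] (x y : I → ℂ) : ℂ :=
  ∑ i, (starRingEnd ℂ) (x i) * y i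

lemma omg_prim (p : ℕ) (hp : p ≠ 0) : IsPrimitiveRoot (omg p) p := by
  have := Complex.isPrimitiveRoot_exp p hp
  exact this

noncomputable def zomg (p : ℕ) (s : ZMod p) : ℂ := omg p ^ s.val

lemma omg_pow_p (p : ℕ) (hp : p ≠ 0) : omg p ^ p = 1 := (omg_prim p hp).pow_eq_one

lemma zomg_add (p : ℕ) [NeZero p] (s t : ZMod p) :
    zomg p (s + t) = zomg p s * zomg p t := by
  have hp : p ≠ 0 := NeZero.ne p
  unfold zomg
  rw [ZMod.val_add, ← pow_add]
  conv_rhs => rw [← Nat.div_add_mod (s.val + t.val) p]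
  rw [pow_add, pow_mul, omg_pow_p p hp, one_pow, one_mul]

lemma zomg_sum (p : ℕ) [NeZero p] {ι : Type*} (s : Finset ι) (f : ι → ZMod p) :
    zomg p (∑ i ∈ s, f i) = ∏ i ∈ s, zomg p (f i) := by
  classical
  induction s using Finset.induction with
  | empty => simp [zomg]
  | @insert a s h ih => rw [Finset.sum_insert h, Finset.prod_insert h, zomg_add, ih]

lemma zomg_ne_one (p : ℕ) [Fact p.Prime] {s : ZMod p} (hs : s ≠ 0) : zomg p s ≠ 1 := by
  have hp : p ≠ 0 := (Fact.out : p.Prime).ne_zero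
  have hprim := omg_prim p hp
  have hv : s.val ≠ 0 := by
    intro h
    exact hs (by rwa [← ZMod.val_eq_zero])
  exact hprim.pow_ne_one_of_pos_of_lt hv (ZMod.val_lt s)

lemma zomg_conj_mul (p : ℕ) (s : ZMod p) :
    (starRingEnd ℂ) (zomg p s) * zomg p s = 1 := by
  have habs : ‖omg p‖ = 1 := by
    simp [omg, Complex.norm_exp]
  rw [← Complex.normSq_eq_conj_mul_self]
  rw [Complex.normSq_eq_norm_sq]
  simp only [zomg, norm_pow, habs, one_pow]
  norm_num

lemma sum_pi_prod {ι α β : Type*} [Fintype ι] [DecidableEq ι] [Fintype α] [DecidableEq α]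
    [CommSemiring β] (f : ι → α → β) :
    ∑ x : ι → α, ∏ t, f t (x t) = ∏ t, ∑ y, f t y := by
  rw [Finset.prod_univ_sum, Fintype.piFinset_univ]

lemma XZ_mul (p n : ℕ) [NeZero p] (u v : Fin n → ZMod p × ZMod p) :
    XZ p n u * XZ p n v
      = fun j i => if ∀ t, j t = i t + (v t).1 + (u t).1 then
          ∏ t : Fin n, (zomg p ((u t).2 * (i t + (v t).1)) * zomg p ((v t).2 * i t)) else 0 := by
  classical
  funext j i
  simp only [Matrix.mul_apply, XZ]
  have : ∀ k : Fin n → ZMod p,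
      (∏ t, if j t = k t + (u t).1 then omg p ^ ((u t).2 * k t).val else 0) *
      (∏ t, if k t = i t + (v t).1 then omg p ^ ((v t).2 * i t).val else 0)
      = ∏ t, ((if j t = k t + (u t).1 then omg p ^ ((u t).2 * k t).val else 0) *
              (if k t = i t + (v t).1 then omg p ^ ((v t).2 * i t).val else 0)) := by
    intro k; rw [Finset.prod_mul_distrib]
  simp only [this]
  rw [sum_pi_prod (fun t x => (if j t = x + (u t).1 then omg p ^ ((u t).2 * x).val else 0) *
        (if x = i t + (v t).1 then omg p ^ ((v t).2 * i t).val else 0))]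
  have hfac : ∀ t : Fin n,
      (∑ x : ZMod p, (if j t = x + (u t).1 then omg p ^ ((u t).2 * x).val else 0) *
        (if x = i t + (v t).1 then omg p ^ ((v t).2 * i t).val else 0))
      = if j t = i t + (v t).1 + (u t).1 then
          zomg p ((u t).2 * (i t + (v t).1)) * zomg p ((v t).2 * i t) else 0 := by
    intro t
    rw [Finset.sum_eq_single (i t + (v t).1)]
    · simp [zomg]
    · intro b _ hb; simp [hb]
    · simp
  rw [Finset.prod_congr rfl (fun t _ => hfac t)]
  by_cases h : ∀ t, j t = i t + (v t).1 + (u t).1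
  · simp only [if_pos h]
    exact Finset.prod_congr rfl (fun t _ => by rw [if_pos (h t)])
  · simp only [if_neg h]
    push_neg at h
    obtain ⟨t, ht⟩ := h
    exact Finset.prod_eq_zero (Finset.mem_univ t) (by rw [if_neg ht])

lemma XZ_comm (p n : ℕ) [NeZero p] (u v : Fin n → ZMod p × ZMod p) :
    XZ p n u * XZ p n v = zomg p (symp p n u v) • (XZ p n v * XZ p n u) := by
  classical
  rw [XZ_mul, XZ_mul]
  funext j i
  change _ = zomg p (symp p n u v) * (if ∀ t, j t = i t + (u t).1 + (v t).1 then
    ∏ t : Fin n, (zomg p ((v t).2 * (i t + (u t).1)) * zomg p ((u t).2 * i t)) else 0)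
  have hcond : (∀ t, j t = i t + (v t).1 + (u t).1) ↔ (∀ t, j t = i t + (u t).1 + (v t).1) := by
    constructor <;> (intro h t; rw [h t]; ring)
  by_cases h : ∀ t, j t = i t + (v t).1 + (u t).1
  · rw [if_pos h, if_pos (hcond.mp h)]
    rw [symp, zomg_sum, ← Finset.prod_mul_distrib]
    refine Finset.prod_congr rfl (fun t _ => ?_)
    rw [← zomg_add, ← zomg_add, ← zomg_add]
    congr 1
    ring
  · rw [if_neg h, if_neg (fun hh => h (hcond.mpr hh)), mul_zero]

lemma XZ_unitary (p n : ℕ) [NeZero p] (u : Fin n → ZMod p × ZMod p) :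
    (XZ p n u)ᴴ * XZ p n u = 1 := by
  classical
  funext j i
  simp only [Matrix.mul_apply, Matrix.conjTranspose_apply, XZ, Matrix.one_apply]
  simp only [star_prod, apply_ite star, star_zero]
  have : ∀ k : Fin n → ZMod p,
      (∏ t, if k t = j t + (u t).1 then star (omg p ^ ((u t).2 * j t).val) else 0) *
      (∏ t, if k t = i t + (u t).1 then omg p ^ ((u t).2 * i t).val else 0)
      = ∏ t, ((if k t = j t + (u t).1 then star (omg p ^ ((u t).2 * j t).val) else 0) *
              (if k t = i t + (u t).1 then omg p ^ ((u t).2 * i t).val else 0)) := by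
    intro k; rw [Finset.prod_mul_distrib]
  simp only [this]
  rw [sum_pi_prod (fun t x => (if x = j t + (u t).1 then star (omg p ^ ((u t).2 * j t).val) else 0) *
        (if x = i t + (u t).1 then omg p ^ ((u t).2 * i t).val else 0))]
  have hfac : ∀ t : Fin n,
      (∑ x : ZMod p, (if x = j t + (u t).1 then star (omg p ^ ((u t).2 * j t).val) else 0) *
        (if x = i t + (u t).1 then omg p ^ ((u t).2 * i t).val else 0))
      = if j t = i t then 1 else 0 := by
    intro t
    rw [Finset.sum_eq_single (i t + (u t).1)]
    · by_cases h : j t = i t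
      · have := zomg_conj_mul p ((u t).2 * i t)
        simp [h, zomg] at this ⊢
        exact this
      · have : ¬ (i t + (u t).1 = j t + (u t).1) := fun hh => h (by
          have := add_right_cancel hh; exact this.symm)
        simp [this, h]
    · intro b _ hb; simp [hb]
    · simp
  rw [Finset.prod_congr rfl (fun t _ => hfac t)]
  by_cases h : j = i
  · simp [h]
  · rw [if_neg h]
    have : ∃ t, j t ≠ i t := by
      by_contra hh; push_neg at hh; exact h (funext hh)
    obtain ⟨t, ht⟩ := this
    exact Finset.prod_eq_zero (Finset.mem_univ t) (by rw [if_neg ht])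

lemma symp_anti (p n : ℕ) (u v : Fin n → ZMod p × ZMod p) :
    symp p n u v = - symp p n v u := by
  unfold symp
  rw [← Finset.sum_neg_distrib]
  exact Finset.sum_congr rfl fun t _ => by ring

lemma cinner_smul_right {I : Type*} [Fintype I] (a : ℂ) (x y : I → ℂ) :
    cinner x (a • y) = a * cinner x y := by
  simp only [cinner, Pi.smul_apply, smul_eq_mul, Finset.mul_sum]
  exact Finset.sum_congr rfl fun i _ => by ring

lemma cinner_smul_left {I : Type*} [Fintype I] (a : ℂ) (x y : I → ℂ) :
    cinner (a • x) y = (starRingEnd ℂ) a * cinner x y := by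
  simp only [cinner, Pi.smul_apply, smul_eq_mul, Finset.mul_sum]
  exact Finset.sum_congr rfl fun i _ => by rw [_root_.map_mul]; ring

lemma cinner_mulVec {I : Type*} [Fintype I] (M : Matrix I I ℂ) (x y : I → ℂ) :
    cinner x (M *ᵥ y) = cinner (Mᴴ *ᵥ x) y := by
  have h1 : ∀ (u v : I → ℂ), cinner u v = dotProduct (star u) v := by
    intro u v; simp [cinner, dotProduct]
  rw [h1, h1, Matrix.dotProduct_mulVec, Matrix.star_mulVec,
    Matrix.conjTranspose_conjTranspose]

lemma cinner_self_ne_zero {I : Type*} [Fintype I] {x : I → ℂ} (hx : x ≠ 0) :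
    cinner x x ≠ 0 := by
  have h : cinner x x = ((∑ i, Complex.normSq (x i) : ℝ) : ℂ) := by
    push_cast
    refine Finset.sum_congr rfl (fun i _ => ?_)
    rw [Complex.normSq_eq_conj_mul_self]
  rw [h, Ne, Complex.ofReal_eq_zero]
  intro h0
  apply hx
  funext i
  have := (Finset.sum_eq_zero_iff_of_nonneg
    (fun i _ => Complex.normSq_nonneg (x i))).mp h0 i (Finset.mem_univ i)
  exact Complex.normSq_eq_zero.mp this


/-- An error `XZ(e)` with `e ∉ C^⊥` maps the stabilizer code (joint eigenspace with
eigenvalues `λ`) into an orthogonal eigenspace: `⟨ψ′, XZ(e)ψ⟩ = 0`. -/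
theorem error_outside_perp_orthogonal (p n : ℕ) [Fact p.Prime]
    (C : Submodule (ZMod p) (Fin n → ZMod p × ZMod p)) (lam : C → ℂ)
    (ψ ψ' : (Fin n → ZMod p) → ℂ)
    (hψ : ∀ c : C, XZ p n c.val *ᵥ ψ = lam c • ψ)
    (hψ' : ∀ c : C, XZ p n c.val *ᵥ ψ' = lam c • ψ')
    (e : Fin n → ZMod p × ZMod p) (he : ¬ ∀ c ∈ C, symp p n c e = 0) :
    cinner ψ' (XZ p n e *ᵥ ψ) = 0 := by
  haveI : NeZero p := ⟨(Fact.out : p.Prime).ne_zero⟩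
  push_neg at he
  obtain ⟨c, hc, hs⟩ := he
  by_cases hz : ψ' = 0
  · simp [cinner, hz]
  set U := XZ p n c with hUdef
  set E := XZ p n e with hEdef
  set l := lam ⟨c, hc⟩ with hl
  have hU : U *ᵥ ψ = l • ψ := hψ ⟨c, hc⟩
  have hU' : U *ᵥ ψ' = l • ψ' := hψ' ⟨c, hc⟩
  have hunit : Uᴴ * U = 1 := XZ_unitary p n c
  have hll : (starRingEnd ℂ) l * l = 1 := by
    have h1 : cinner (U *ᵥ ψ') (U *ᵥ ψ') = cinner ψ' ψ' := by
      rw [cinner_mulVec, Matrix.mulVec_mulVec, hunit, Matrix.one_mulVec]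
    rw [hU', cinner_smul_left, cinner_smul_right] at h1
    have hne := cinner_self_ne_zero hz
    have h2 : ((starRingEnd ℂ) l * l) * cinner ψ' ψ' = 1 * cinner ψ' ψ' := by
      rw [one_mul, mul_assoc]; exact h1
    exact mul_right_cancel₀ hne h2
  have hl0 : l ≠ 0 := by
    intro h0; rw [h0, mul_zero] at hll; exact zero_ne_one hll
  have hconj : (starRingEnd ℂ) l⁻¹ = l := by
    have hcl : (starRingEnd ℂ) l = l⁻¹ := eq_inv_of_mul_eq_one_left hll
    rw [map_inv₀, hcl, inv_inv]
  have hadj' : Uᴴ *ᵥ ψ' = l⁻¹ • ψ' := by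
    have h1 : l • (Uᴴ *ᵥ ψ') = ψ' := by
      rw [← Matrix.mulVec_smul, ← hU', Matrix.mulVec_mulVec, hunit, Matrix.one_mulVec]
    calc Uᴴ *ᵥ ψ' = l⁻¹ • (l • (Uᴴ *ᵥ ψ')) := by
          rw [smul_smul, inv_mul_cancel₀ hl0, one_smul]
      _ = l⁻¹ • ψ' := by rw [h1]
  have hsec : symp p n e c ≠ 0 := by
    intro h0
    apply hs
    rw [symp_anti, h0, neg_zero]
  have key : l * cinner ψ' (E *ᵥ ψ)
      = zomg p (symp p n e c) * (l * cinner ψ' (E *ᵥ ψ)) := by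
    calc l * cinner ψ' (E *ᵥ ψ)
        = cinner ψ' (E *ᵥ (U *ᵥ ψ)) := by
          rw [hU, Matrix.mulVec_smul, cinner_smul_right]
      _ = cinner ψ' ((E * U) *ᵥ ψ) := by rw [Matrix.mulVec_mulVec]
      _ = zomg p (symp p n e c) * cinner ψ' (U *ᵥ (E *ᵥ ψ)) := by
          rw [hEdef, hUdef, XZ_comm, Matrix.smul_mulVec, cinner_smul_right,
            Matrix.mulVec_mulVec]
      _ = zomg p (symp p n e c) * cinner (Uᴴ *ᵥ ψ') (E *ᵥ ψ) := by
          rw [cinner_mulVec]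
      _ = zomg p (symp p n e c) * (l * cinner ψ' (E *ᵥ ψ)) := by
          rw [hadj', cinner_smul_left, hconj]
  have hz1 : zomg p (symp p n e c) ≠ 1 := zomg_ne_one p hsec
  have : (1 - zomg p (symp p n e c)) * (l * cinner ψ' (E *ᵥ ψ)) = 0 := by
    linear_combination key
  rcases mul_eq_zero.mp this with h | h
  · exact absurd (by linear_combination -h) hz1
  · rcases mul_eq_zero.mp h with h' | h'
    · exact absurd h' hl0
    · exact h'
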